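/- Let P and P̂ be orthogonal projections of equal finite rank on a Hilbert space. Then ‖P(P̂ − P)P‖₁ = tr(P − P P̂ P) = ‖P̂ − P‖₂²/2, where ‖·‖₁ is the trace norm and ‖·‖₂ the Hilbert–Schmidt norm. In particular, the operator P − P P̂ P is positive. -/
import Mathlib


open scoped RealInnerProductSpace

/-- Squared Hilbert–Schmidt norm `‖T‖₂² = ∑_i ‖T e_i‖²` with respect to a Hilbert basis. -/
noncomputable def hsNormSq {H : Type*} [NormedAddCommGroup H] [InnerProductSpace ℝ H]
    {ι : Type*} (e : ι → H) (T : H →L[ℝ] H) : ℝ :=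
  ∑' i, ‖T (e i)‖ ^ 2

/-- Trace `tr T = ∑_i ⟨e_i, T e_i⟩` with respect to a Hilbert basis. -/
noncomputable def trBasis {H : Type*} [NormedAddCommGroup H] [InnerProductSpace ℝ H]
    {ι : Type*} (e : ι → H) (T : H →L[ℝ] H) : ℝ :=
  ∑' i, ⟪e i, T (e i)⟫

/-- Trace (nuclear) norm, characterised as the supremum of `∑_i |⟨v_i, T w_i⟩|` over finite
orthonormal families `(v_i)`, `(w_i)`. -/
noncomputable def traceNorm {H : Type*} [NormedAddCommGroup H] [InnerProductSpace ℝ H]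
    (T : H →L[ℝ] H) : ℝ :=
  ⨆ n : ℕ, ⨆ p : {p : (Fin n → H) × (Fin n → H) // Orthonormal ℝ p.1 ∧ Orthonormal ℝ p.2},
    ∑ i, |⟪p.1.1 i, T (p.1.2 i)⟫|

section helpers
set_option linter.unusedSectionVars false
variable {H : Type*} [NormedAddCommGroup H] [InnerProductSpace ℝ H] [CompleteSpace H]

lemma proj_inner {Q : H →L[ℝ] H} (hsa : IsSelfAdjoint Q) (x y : H) :
    ⟪Q x, y⟫ = ⟪x, Q y⟫ := by
  rw [ContinuousLinearMap.isSelfAdjoint_iff'] at hsa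
  conv_lhs => rw [← hsa]
  exact ContinuousLinearMap.adjoint_inner_left Q y x

lemma proj_fix {Q : H →L[ℝ] H} (hQ : IsIdempotentElem Q) {x : H}
    (hx : x ∈ LinearMap.range (Q : H →ₗ[ℝ] H)) : Q x = x := by
  obtain ⟨y, rfl⟩ := hx
  have : (Q * Q) y = Q y := by rw [hQ.eq]
  simpa [ContinuousLinearMap.mul_apply] using this

lemma proj_mem {Q : H →L[ℝ] H} (x : H) : Q x ∈ LinearMap.range (Q : H →ₗ[ℝ] H) :=
  ⟨x, rfl⟩

lemma proj_decomp {Q : H →L[ℝ] H} (hQ : IsIdempotentElem Q) (hsa : IsSelfAdjoint Q)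
    {m : ℕ} (b : OrthonormalBasis (Fin m) ℝ (LinearMap.range (Q : H →ₗ[ℝ] H)))
    (x : H) : Q x = ∑ k, ⟪(b k : H), x⟫ • (b k : H) := by
  have h1 : ∑ k, b.repr ⟨Q x, proj_mem x⟩ k • b k = (⟨Q x, proj_mem x⟩ :
      LinearMap.range (Q : H →ₗ[ℝ] H)) := b.sum_repr _
  have h2 : ∀ k, b.repr ⟨Q x, proj_mem x⟩ k = ⟪(b k : H), x⟫ := by
    intro k
    rw [b.repr_apply_apply]
    have : ⟪(b k : LinearMap.range (Q : H →ₗ[ℝ] H)), ⟨Q x, proj_mem x⟩⟫ =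
        ⟪(b k : H), Q x⟫ := rfl
    rw [this, ← proj_inner hsa, proj_fix hQ (b k).2]
  have h3 := congrArg (Subtype.val) h1
  simp only [Submodule.coe_sum, Submodule.coe_smul] at h3
  rw [← h3]
  exact Finset.sum_congr rfl fun k _ => by rw [h2 k]

lemma trace_key {ι : Type*} (e : HilbertBasis ι ℝ H)
    {Q : H →L[ℝ] H} (hQ : IsIdempotentElem Q) (hsa : IsSelfAdjoint Q)
    {m : ℕ} (b : OrthonormalBasis (Fin m) ℝ (LinearMap.range (Q : H →ₗ[ℝ] H)))
    (T : H →L[ℝ] H) :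
    Summable (fun i => ⟪e i, (Q ∘L T) (e i)⟫) ∧
    trBasis e (Q ∘L T) = ∑ k, ⟪(b k : H), T (b k : H)⟫ := by
  set u : Fin m → H := fun k => (b k : H) with hu
  have key : ∀ i, ⟪e i, (Q ∘L T) (e i)⟫ =
      ∑ k, ⟪u k, e i⟫ * ⟪e i, ContinuousLinearMap.adjoint T (u k)⟫ := by
    intro i
    rw [ContinuousLinearMap.comp_apply, ← proj_inner hsa,
      proj_decomp hQ hsa b (e i), sum_inner]
    refine Finset.sum_congr rfl fun k _ => ?_
    rw [real_inner_smul_left, ContinuousLinearMap.adjoint_inner_right,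
      real_inner_comm (T (e i)) (u k)]
  have hsumm : ∀ k : Fin m, Summable (fun i =>
      ⟪u k, e i⟫ * ⟪e i, ContinuousLinearMap.adjoint T (u k)⟫) := fun k =>
    e.summable_inner_mul_inner (u k) (ContinuousLinearMap.adjoint T (u k))
  constructor
  · exact ((summable_sum (fun k _ => hsumm k)).congr (fun i => (key i).symm))
  · rw [trBasis, tsum_congr key, Summable.tsum_finsetSum (fun k _ => hsumm k)]
    refine Finset.sum_congr rfl fun k _ => ?_
    rw [e.tsum_inner_mul_inner, ContinuousLinearMap.adjoint_inner_right,
      real_inner_comm (T (u k)) (u k)]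

lemma proj_contract {Q : H →L[ℝ] H} (hQ : IsIdempotentElem Q) (hsa : IsSelfAdjoint Q) (x : H) :
    ‖Q x‖ ≤ ‖x‖ := by
  have h : ‖Q x‖ ^ 2 = ⟪x, Q x⟫ := by
    rw [← real_inner_self_eq_norm_sq, proj_inner hsa, proj_fix hQ (proj_mem x)]
  have h2 : ⟪x, Q x⟫ ≤ ‖x‖ * ‖Q x‖ := real_inner_le_norm x (Q x)
  rcases eq_or_lt_of_le (norm_nonneg (Q x)) with h0 | h0
  · rw [← h0]; exact norm_nonneg x
  · have := h.trans_le h2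
    rw [sq] at this
    exact le_of_mul_le_mul_right (by linarith [mul_comm ‖x‖ ‖Q x‖]) h0

lemma pos_key {P Phat : H →L[ℝ] H}
    (hP : IsIdempotentElem P) (hPsa : IsSelfAdjoint P)
    (hPhat : IsIdempotentElem Phat) (hPhatsa : IsSelfAdjoint Phat) (v : H) :
    0 ≤ ⟪v, (P - P ∘L Phat ∘L P) v⟫ := by
  have h1 : ⟪v, P v⟫ = ‖P v‖ ^ 2 := by
    rw [← real_inner_self_eq_norm_sq]
    conv_rhs => rw [proj_inner hPsa, proj_fix hP (proj_mem v)]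
  have h2 : ⟪v, (P ∘L Phat ∘L P) v⟫ = ‖Phat (P v)‖ ^ 2 := by
    simp only [ContinuousLinearMap.comp_apply]
    rw [← proj_inner hPsa, ← real_inner_self_eq_norm_sq]
    conv_rhs => rw [proj_inner hPhatsa, proj_fix hPhat (proj_mem (P v))]
  have h3 : ‖Phat (P v)‖ ^ 2 ≤ ‖P v‖ ^ 2 :=
    pow_le_pow_left₀ (norm_nonneg _) (proj_contract hPhat hPhatsa (P v)) 2
  simp only [ContinuousLinearMap.sub_apply, inner_sub_right]
  rw [h1, h2]
  linarith

end helpers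
section main
set_option linter.unusedSectionVars false
set_option maxHeartbeats 1000000

/-- For orthogonal projections `P`, `P̂` of equal finite rank,
`‖P(P̂ − P)P‖₁ = tr(P − P P̂ P) = ‖P̂ − P‖₂²/2`; in particular `P − P P̂ P` is positive. -/
theorem stmt10
    {H : Type*} [NormedAddCommGroup H] [InnerProductSpace ℝ H] [CompleteSpace H]
    {ι : Type*} (e : HilbertBasis ι ℝ H)
    (P Phat : H →L[ℝ] H)
    (hP : IsIdempotentElem P) (hPsa : IsSelfAdjoint P)
    (hPhat : IsIdempotentElem Phat) (hPhatsa : IsSelfAdjoint Phat)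
    (hfin : FiniteDimensional ℝ (LinearMap.range (P : H →ₗ[ℝ] H)))
    (hfinhat : FiniteDimensional ℝ (LinearMap.range (Phat : H →ₗ[ℝ] H)))
    (hrank : Module.finrank ℝ (LinearMap.range (P : H →ₗ[ℝ] H)) =
      Module.finrank ℝ (LinearMap.range (Phat : H →ₗ[ℝ] H))) :
    traceNorm (P ∘L (Phat - P) ∘L P) = trBasis e (P - P ∘L Phat ∘L P) ∧
      trBasis e (P - P ∘L Phat ∘L P) = hsNormSq e (Phat - P) / 2 ∧
      ∀ v : H, 0 ≤ ⟪v, (P - P ∘L Phat ∘L P) v⟫ := by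

  classical
  set F := LinearMap.range (P : H →ₗ[ℝ] H) with hF
  set Fh := LinearMap.range (Phat : H →ₗ[ℝ] H) with hFh
  set A : H →L[ℝ] H := P - P ∘L Phat ∘L P with hA
  have hpos : ∀ v : H, 0 ≤ ⟪v, A v⟫ := pos_key hP hPsa hPhat hPhatsa
  have hPP : ∀ x, P (P x) = P x := fun x => proj_fix hP (proj_mem x)
  have hAapp : ∀ x, A x = P x - P (Phat (P x)) := by
    intro x; simp [hA, ContinuousLinearMap.sub_apply, ContinuousLinearMap.comp_apply]
  have hAmem : ∀ x, A x ∈ F := by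
    intro x; rw [hAapp]; exact sub_mem (proj_mem x) (proj_mem _)
  have hAsa : ∀ x y : H, ⟪A x, y⟫ = ⟪x, A y⟫ := by
    intro x y
    simp only [hAapp, inner_sub_left, inner_sub_right]
    rw [proj_inner hPsa]
    congr 1
    rw [proj_inner hPsa, proj_inner hPhatsa, proj_inner hPsa]
  -- the restriction of A to F
  set S : F →ₗ[ℝ] F := (A : H →ₗ[ℝ] H).restrict (fun x _ => hAmem x) with hS
  have hScoe : ∀ x : F, (S x : H) = A (x : H) := fun x => rfl
  have hSsymm : S.IsSymmetric := by
    intro x y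
    have : ⟪S x, y⟫ = ⟪(S x : H), (y : H)⟫ := rfl
    rw [this, hScoe, hAsa]
    rfl
  set n := Module.finrank ℝ F with hn0
  have hn : Module.finrank ℝ F = n := rfl
  set b := hSsymm.eigenvectorBasis hn with hb
  set μ := hSsymm.eigenvalues hn with hμ
  set u : Fin n → H := fun k => (b k : H) with hu
  have hAu : ∀ k, A (u k) = μ k • u k := by
    intro k
    have h := hSsymm.apply_eigenvectorBasis hn k
    have := congrArg (Subtype.val) h
    rw [hScoe] at this
    simpa using this
  have hu_on : Orthonormal ℝ u := by
    have hb2 := b.orthonormal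
    rw [orthonormal_iff_ite] at hb2 ⊢
    intro i j
    exact hb2 i j
  have hPu : ∀ k, P (u k) = u k := fun k => proj_fix hP (b k).2
  have hnorm_u : ∀ k, ⟪u k, u k⟫ = 1 := by
    intro k
    rw [real_inner_self_eq_norm_sq, hu_on.1 k]
    norm_num
  have hinner_Au : ∀ k, ⟪u k, A (u k)⟫ = μ k := by
    intro k
    rw [hAu k, real_inner_smul_right, hnorm_u k, mul_one]
  have hmu_nonneg : ∀ k, 0 ≤ μ k := fun k => (hinner_Au k) ▸ hpos (u k)
  have hmu_eq : ∀ k, μ k = 1 - ⟪u k, Phat (u k)⟫ := by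
    intro k
    rw [← hinner_Au k, hAapp, inner_sub_right, hPu k, hnorm_u k]
    congr 1
    rw [← proj_inner hPsa, hPu k]
  -- trace of A via eigenbasis
  have hAform : A = P ∘L (1 - Phat ∘L P) := by
    ext x
    simp [hAapp, ContinuousLinearMap.comp_apply, ContinuousLinearMap.sub_apply,
      ContinuousLinearMap.one_apply, map_sub]
  set s := ∑ k, ⟪u k, Phat (u k)⟫ with hs
  have hterm : ∀ k, ⟪u k, (1 - Phat ∘L P) (u k)⟫ = 1 - ⟪u k, Phat (u k)⟫ := by
    intro k
    simp only [ContinuousLinearMap.sub_apply, ContinuousLinearMap.comp_apply,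
      ContinuousLinearMap.one_apply, inner_sub_right, hPu k, hnorm_u k]
  have htrA : trBasis e A = (n : ℝ) - s := by
    rw [hAform, (trace_key e hP hPsa b (1 - Phat ∘L P)).2]
    rw [Finset.sum_congr rfl fun k _ => hterm k, Finset.sum_sub_distrib, hs]
    simp
  have hsum_mu : ∑ k, μ k = (n : ℝ) - s := by
    rw [Finset.sum_congr rfl fun k _ => hmu_eq k, Finset.sum_sub_distrib, hs]
    simp
  -- the Phat side basis
  set m := Module.finrank ℝ Fh with hm0
  set bh := stdOrthonormalBasis ℝ Fh with hbh
  set uh : Fin m → H := fun k => (bh k : H) with huh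
  have hPhuh : ∀ k, Phat (uh k) = uh k := fun k => proj_fix hPhat (bh k).2
  have hnorm_uh : ∀ k, ⟪uh k, uh k⟫ = 1 := by
    intro k
    rw [real_inner_self_eq_norm_sq]
    have : ‖uh k‖ = ‖bh k‖ := rfl
    rw [this, (bh.orthonormal).1 k]
    norm_num
  set t := ∑ k, ⟪uh k, P (uh k)⟫ with ht
  have hts : t = s := by
    have h1 : ∀ k', ⟪uh k', P (uh k')⟫ = ∑ k, ⟪u k, uh k'⟫ * ⟪u k, uh k'⟫ := by
      intro k'
      rw [proj_decomp hP hPsa b (uh k'), inner_sum]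
      exact Finset.sum_congr rfl fun k _ => by
        rw [real_inner_smul_right, real_inner_comm (uh k') (u k)]
    have h2 : ∀ k, ⟪u k, Phat (u k)⟫ = ∑ k', ⟪uh k', u k⟫ * ⟪uh k', u k⟫ := by
      intro k
      rw [proj_decomp hPhat hPhatsa bh (u k), inner_sum]
      exact Finset.sum_congr rfl fun k' _ => by
        rw [real_inner_smul_right, real_inner_comm (u k) (uh k')]
    rw [ht, hs, Finset.sum_congr rfl fun k' _ => h1 k', Finset.sum_comm]
    refine Finset.sum_congr rfl fun k _ => ?_
    rw [h2 k]
    exact Finset.sum_congr rfl fun k' _ => by rw [real_inner_comm (u k) (uh k')]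
  -- Hilbert-Schmidt norm squared
  have hptw : ∀ x, ‖(Phat - P) x‖ ^ 2 =
      ⟪x, (Phat ∘L (1 - P)) x⟫ + ⟪x, (P ∘L (1 - Phat)) x⟫ := by
    intro x
    rw [← real_inner_self_eq_norm_sq]
    simp only [ContinuousLinearMap.sub_apply, ContinuousLinearMap.comp_apply,
      ContinuousLinearMap.one_apply, inner_sub_left, inner_sub_right, map_sub]
    have e1 : ⟪Phat x, Phat x⟫ = ⟪x, Phat x⟫ := by
      conv_lhs => rw [proj_inner hPhatsa, proj_fix hPhat (proj_mem x)]
    have e2 : ⟪P x, P x⟫ = ⟪x, P x⟫ := by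
      conv_lhs => rw [proj_inner hPsa, proj_fix hP (proj_mem x)]
    have e3 : ⟪Phat x, P x⟫ = ⟪x, Phat (P x)⟫ := proj_inner hPhatsa x (P x)
    have e4 : ⟪P x, Phat x⟫ = ⟪x, P (Phat x)⟫ := proj_inner hPsa x (Phat x)
    linarith
  have hhs : hsNormSq e (Phat - P) = ((m : ℝ) - t) + ((n : ℝ) - s) := by
    have hsummhat := trace_key e hPhat hPhatsa bh (1 - P)
    have hsummP := trace_key e hP hPsa b (1 - Phat)
    have step : hsNormSq e (Phat - P) =
        trBasis e (Phat ∘L (1 - P)) + trBasis e (P ∘L (1 - Phat)) := by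
      rw [hsNormSq, trBasis, trBasis, ← Summable.tsum_add hsummhat.1 hsummP.1]
      exact tsum_congr fun i => hptw (e i)
    rw [step, hsummhat.2, hsummP.2]
    have c1 : ∑ k, ⟪uh k, (1 - P) (uh k)⟫ = (m : ℝ) - t := by
      have hterm' : ∀ k : Fin m, ⟪uh k, (1 - P) (uh k)⟫ = 1 - ⟪uh k, P (uh k)⟫ := by
        intro k
        simp only [ContinuousLinearMap.sub_apply, ContinuousLinearMap.one_apply,
          inner_sub_right, hnorm_uh k]
      rw [Finset.sum_congr rfl fun k _ => hterm' k, Finset.sum_sub_distrib, ht]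
      simp
    have c2 : ∑ k, ⟪u k, (1 - Phat) (u k)⟫ = (n : ℝ) - s := by
      have hterm' : ∀ k : Fin n, ⟪u k, (1 - Phat) (u k)⟫ = 1 - ⟪u k, Phat (u k)⟫ := by
        intro k
        simp only [ContinuousLinearMap.sub_apply, ContinuousLinearMap.one_apply,
          inner_sub_right, hnorm_u k]
      rw [Finset.sum_congr rfl fun k _ => hterm' k, Finset.sum_sub_distrib, hs]
      simp
    rw [c1, c2]
  have hmn : (m : ℝ) = (n : ℝ) := by exact_mod_cast congrArg Nat.cast hrank.symm
  have part2 : trBasis e A = hsNormSq e (Phat - P) / 2 := by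
    rw [htrA, hhs, hts, hmn]
    ring
  refine ⟨?_, part2, hpos⟩
  -- Part 1: trace norm of M = P ∘L (Phat - P) ∘L P
  set M : H →L[ℝ] H := P ∘L (Phat - P) ∘L P with hM
  have hMA : ∀ x, M x = -(A x) := by
    intro x
    simp only [hM, ContinuousLinearMap.comp_apply, ContinuousLinearMap.sub_apply, map_sub,
      hAapp, hPP]
    abel
  have hAx : ∀ x, A x = ∑ k, (μ k * ⟪u k, x⟫) • u k := by
    intro x
    have hAPx : A (P x) = A x := by simp only [hAapp, hPP]
    rw [← hAPx, proj_decomp hP hPsa b x, map_sum]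
    refine Finset.sum_congr rfl fun k _ => ?_
    rw [map_smul, hAu k, smul_smul, mul_comm]
  set C := ∑ k, μ k with hC
  have hCnn : 0 ≤ C := Finset.sum_nonneg fun k _ => hmu_nonneg k
  have bound : ∀ (n' : ℕ) (v w : Fin n' → H), Orthonormal ℝ v → Orthonormal ℝ w →
      ∑ i, |⟪v i, M (w i)⟫| ≤ C := by
    intro n' v w hv hw
    have CS : ∀ k, ∑ i, |⟪v i, u k⟫| * |⟪u k, w i⟫| ≤ 1 := by
      intro k
      have hsq := Finset.sum_mul_sq_le_sq_mul_sq Finset.univ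
        (fun i => |⟪v i, u k⟫|) (fun i => |⟪u k, w i⟫|)
      have hb1 : ∑ i, |⟪v i, u k⟫| ^ 2 ≤ 1 := by
        have h := hv.sum_inner_products_le (u k) (s := Finset.univ)
        simpa [Real.norm_eq_abs, sq_abs, hu_on.1 k] using h
      have hb2 : ∑ i, |⟪u k, w i⟫| ^ 2 ≤ 1 := by
        have h := hw.sum_inner_products_le (u k) (s := Finset.univ)
        simp only [Real.norm_eq_abs, hu_on.1 k, one_pow] at h
        calc ∑ i, |⟪u k, w i⟫| ^ 2 = ∑ i, |⟪w i, u k⟫| ^ 2 := by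
              exact Finset.sum_congr rfl fun i _ => by rw [real_inner_comm]
          _ ≤ 1 := h
      have hnn : 0 ≤ ∑ i, |⟪v i, u k⟫| * |⟪u k, w i⟫| :=
        Finset.sum_nonneg fun i _ => mul_nonneg (abs_nonneg _) (abs_nonneg _)
      have hb1' : 0 ≤ ∑ i, |⟪v i, u k⟫| ^ 2 := Finset.sum_nonneg fun i _ => sq_nonneg _
      have hb2' : 0 ≤ ∑ i, |⟪u k, w i⟫| ^ 2 := Finset.sum_nonneg fun i _ => sq_nonneg _
      nlinarith [hsq, hb1, hb2, hnn, hb1', hb2']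
    have hle1 : ∀ i, |⟪v i, M (w i)⟫| ≤ ∑ k, μ k * (|⟪v i, u k⟫| * |⟪u k, w i⟫|) := by
      intro i
      rw [hMA (w i), inner_neg_right, abs_neg, hAx (w i), inner_sum]
      refine (Finset.abs_sum_le_sum_abs _ _).trans (Finset.sum_le_sum fun k _ => ?_)
      rw [real_inner_smul_right, abs_mul, abs_mul, abs_of_nonneg (hmu_nonneg k)]
      exact le_of_eq (by ring)
    calc ∑ i, |⟪v i, M (w i)⟫| ≤ ∑ i, ∑ k, μ k * (|⟪v i, u k⟫| * |⟪u k, w i⟫|) :=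
        Finset.sum_le_sum fun i _ => hle1 i
      _ = ∑ k, ∑ i, μ k * (|⟪v i, u k⟫| * |⟪u k, w i⟫|) := Finset.sum_comm
      _ = ∑ k, μ k * ∑ i, |⟪v i, u k⟫| * |⟪u k, w i⟫| :=
        Finset.sum_congr rfl fun k _ => (Finset.mul_sum _ _ _).symm
      _ ≤ ∑ k, μ k * 1 := Finset.sum_le_sum fun k _ =>
        mul_le_mul_of_nonneg_left (CS k) (hmu_nonneg k)
      _ = C := by simp [hC]
  have hval : ∑ k, |⟪u k, M (u k)⟫| = C := by
    refine Finset.sum_congr rfl fun k _ => ?_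
    rw [hMA (u k), inner_neg_right, abs_neg, hinner_Au k, abs_of_nonneg (hmu_nonneg k)]
  have htn : traceNorm M = C := by
    have hub : ∀ n' : ℕ, (⨆ p : {p : (Fin n' → H) × (Fin n' → H) //
        Orthonormal ℝ p.1 ∧ Orthonormal ℝ p.2}, ∑ i, |⟪p.1.1 i, M (p.1.2 i)⟫|) ≤ C :=
      fun n' => Real.iSup_le (fun p => bound n' p.1.1 p.1.2 p.2.1 p.2.2) hCnn
    refine le_antisymm (Real.iSup_le hub hCnn) ?_
    have hbdd1 : BddAbove (Set.range (fun p : {p : (Fin n → H) × (Fin n → H) //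
        Orthonormal ℝ p.1 ∧ Orthonormal ℝ p.2} => ∑ i, |⟪p.1.1 i, M (p.1.2 i)⟫|)) :=
      ⟨C, by rintro x ⟨p, rfl⟩; exact bound n p.1.1 p.1.2 p.2.1 p.2.2⟩
    have hbdd2 : BddAbove (Set.range (fun n' : ℕ =>
        ⨆ p : {p : (Fin n' → H) × (Fin n' → H) //
          Orthonormal ℝ p.1 ∧ Orthonormal ℝ p.2}, ∑ i, |⟪p.1.1 i, M (p.1.2 i)⟫|)) :=
      ⟨C, by rintro x ⟨n', rfl⟩; exact hub n'⟩
    calc C = ∑ k, |⟪u k, M (u k)⟫| := hval.symm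
      _ ≤ ⨆ p : {p : (Fin n → H) × (Fin n → H) //
          Orthonormal ℝ p.1 ∧ Orthonormal ℝ p.2}, ∑ i, |⟪p.1.1 i, M (p.1.2 i)⟫| :=
        le_ciSup hbdd1 ⟨(u, u), hu_on, hu_on⟩
      _ ≤ traceNorm M := le_ciSup hbdd2 n
  rw [htn, htrA]
  exact hsum_mu

end main
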